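/- arXiv:2006.10921 — 5 statements merged into one kernel-verified Lean document; each statement's English description precedes it below -/
import Mathlib

section
/- Let f₁,…,f_M : ℝ^d → ℝ be twice differentiable and L-smooth, let p be a probability distribution on {1,…,M}, let f(w) = E_{i∼p} f_i(w), assume the gradient variance bound E_{i∼p} ‖∇f_i(w) - ∇f(w)‖² ≤ σ² for all w, and let F(w) = E_{i∼p} f_i(w - α∇f_i(w)). Then for any w with ‖∇f(w)‖ ≤ G, one has ‖∇F(w)‖ ≤ (1 + 2αL + α²L²) G + (2αL + α²L²) σ. -/
open InnerProductSpace

section Aux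
variable {d : ℕ}
local notation "E" => EuclideanSpace ℝ (Fin d)

lemma grad_sub_norm (f g : E → ℝ) (x y : E) :
    ‖gradient f x - gradient g y‖ = ‖fderiv ℝ f x - fderiv ℝ g y‖ := by
  rw [gradient, gradient, ← LinearIsometryEquiv.map_sub, LinearIsometryEquiv.norm_map]

lemma grad_norm (f : E → ℝ) (x : E) : ‖gradient f x‖ = ‖fderiv ℝ f x‖ := by
  rw [gradient, LinearIsometryEquiv.norm_map]

lemma grad_diff {f : E → ℝ} (hf : ContDiff ℝ 2 f) : Differentiable ℝ (gradient f) := by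
  have h1 : ContDiff ℝ 1 (fderiv ℝ f) := hf.fderiv_right (by norm_num)
  have : Differentiable ℝ (fun x => (toDual ℝ E).symm (fderiv ℝ f x)) :=
    (toDual ℝ E).symm.toContinuousLinearEquiv.differentiable.comp (h1.differentiable one_ne_zero)
  exact this
end Aux

set_option maxHeartbeats 2000000 in
/-- for `M` twice differentiable `L`-smooth task losses with gradient variance
bounded by `σ²`, at any `w` with `‖∇f(w)‖ ≤ G` the MAML loss gradient satisfies
`‖∇F(w)‖ ≤ (1 + 2αL + α²L²) G + (2αL + α²L²) σ`. -/
theorem stmt_3 {d M : ℕ} (f : Fin M → EuclideanSpace ℝ (Fin d) → ℝ) (p : Fin M → ℝ)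
    (hp : ∀ i, 0 ≤ p i) (hp1 : ∑ i, p i = 1)
    (L σ α G : ℝ) (hL : 0 < L) (hσ : 0 ≤ σ) (hα : 0 < α)
    (hf : ∀ i, ContDiff ℝ 2 (f i))
    (hsmooth : ∀ i, ∀ w u : EuclideanSpace ℝ (Fin d),
      ‖gradient (f i) w - gradient (f i) u‖ ≤ L * ‖w - u‖)
    (favg : EuclideanSpace ℝ (Fin d) → ℝ) (hfavg : favg = fun w => ∑ i, p i * f i w)
    (hvar : ∀ w : EuclideanSpace ℝ (Fin d),
      ∑ i, p i * ‖gradient (f i) w - gradient favg w‖ ^ 2 ≤ σ ^ 2)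
    (F : EuclideanSpace ℝ (Fin d) → ℝ)
    (hF : F = fun w => ∑ i, p i * f i (w - α • gradient (f i) w))
    (w : EuclideanSpace ℝ (Fin d)) (hG : ‖gradient favg w‖ ≤ G) :
    ‖gradient F w‖ ≤ (1 + 2 * α * L + α ^ 2 * L ^ 2) * G + (2 * α * L + α ^ 2 * L ^ 2) * σ := by
  -- basic differentiability
  have hdf : ∀ i, Differentiable ℝ (f i) := fun i => (hf i).differentiable (by norm_num)
  have hgd : ∀ i, Differentiable ℝ (gradient (f i)) := fun i => grad_diff (hf i)
  -- Lipschitz of gradients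
  have lip : ∀ i, LipschitzWith ⟨L, hL.le⟩ (gradient (f i)) := by
    intro i
    apply LipschitzWith.of_dist_le_mul
    intro x y
    rw [dist_eq_norm, dist_eq_norm]
    exact hsmooth i x y
  -- notation
  set T : Fin M → EuclideanSpace ℝ (Fin d) → EuclideanSpace ℝ (Fin d) :=
    fun i x => x - α • gradient (f i) x with hT
  set H : Fin M → (EuclideanSpace ℝ (Fin d) →L[ℝ] EuclideanSpace ℝ (Fin d)) :=
    fun i => fderiv ℝ (gradient (f i)) w with hH
  set D : Fin M → (EuclideanSpace ℝ (Fin d) →L[ℝ] ℝ) :=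
    fun i => fderiv ℝ (f i) (T i w) with hD
  set D0 : Fin M → (EuclideanSpace ℝ (Fin d) →L[ℝ] ℝ) :=
    fun i => fderiv ℝ (f i) w with hD0
  have hHle : ∀ i, ‖H i‖ ≤ L := by
    intro i
    have h := norm_fderiv_le_of_lipschitz ℝ (x₀ := w) (lip i)
    exact h
  -- fderiv of T i at w
  have hTd : ∀ i, HasFDerivAt (T i)
      (ContinuousLinearMap.id ℝ (EuclideanSpace ℝ (Fin d)) - α • H i) w := by
    intro i
    exact (hasFDerivAt_id w).sub (((hgd i w).hasFDerivAt).const_smul α)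
  -- fderiv of F at w
  have hFd : HasFDerivAt F (∑ i, p i •
      ((D i).comp (ContinuousLinearMap.id ℝ (EuclideanSpace ℝ (Fin d)) - α • H i))) w := by
    rw [hF]
    apply HasFDerivAt.fun_sum
    intro i _
    exact (((hdf i (T i w)).hasFDerivAt.comp w (hTd i)).const_mul (p i))
  -- fderiv of favg at w
  have hfavgd : HasFDerivAt favg (∑ i, p i • D0 i) w := by
    rw [hfavg]
    apply HasFDerivAt.fun_sum
    intro i _
    exact ((hdf i w).hasFDerivAt.const_mul (p i))
  set x : Fin M → ℝ := fun i => ‖gradient (f i) w‖ with hx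
  have hx0 : ∀ i, 0 ≤ x i := fun i => norm_nonneg _
  -- distance moved
  have hTw : ∀ i, ‖T i w - w‖ = α * x i := by
    intro i
    simp only [hT, sub_sub_cancel_left, norm_neg, norm_smul, Real.norm_eq_abs,
      abs_of_pos hα, hx]
  have hDsub : ∀ i, ‖D i - D0 i‖ ≤ α * L * x i := by
    intro i
    have h := hsmooth i (T i w) w
    rw [grad_sub_norm, hTw i] at h
    rw [hD, hD0]
    calc ‖fderiv ℝ (f i) (T i w) - fderiv ℝ (f i) w‖ ≤ L * (α * x i) := h
    _ = α * L * x i := by ring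
  have hD0norm : ∀ i, ‖D0 i‖ = x i := fun i => (grad_norm (f i) w).symm
  have hDnorm : ∀ i, ‖D i‖ ≤ (1 + α * L) * x i := by
    intro i
    calc ‖D i‖ ≤ ‖D i - D0 i‖ + ‖D0 i‖ := by
          simpa using norm_add_le (D i - D0 i) (D0 i)
    _ ≤ α * L * x i + x i := add_le_add (hDsub i) (hD0norm i).le
    _ = (1 + α * L) * x i := by ring
  -- per-term remainder bound
  have key : ∀ i, ‖(D i).comp (ContinuousLinearMap.id ℝ (EuclideanSpace ℝ (Fin d)) - α • H i) - D0 i‖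
      ≤ (2 * α * L + α ^ 2 * L ^ 2) * x i := by
    intro i
    have hcomp : (D i).comp (ContinuousLinearMap.id ℝ (EuclideanSpace ℝ (Fin d)) - α • H i)
        = D i - α • (D i).comp (H i) := by
      ext v
      simp [ContinuousLinearMap.comp_sub, map_smul]
    rw [hcomp]
    have h1 : ‖(D i).comp (H i)‖ ≤ ((1 + α * L) * x i) * L :=
      le_trans (ContinuousLinearMap.opNorm_comp_le _ _)
        (mul_le_mul (hDnorm i) (hHle i) (norm_nonneg _) (by positivity))
    have h2 : ‖α • (D i).comp (H i)‖ ≤ α * ‖(D i).comp (H i)‖ := by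
      calc ‖α • (D i).comp (H i)‖ ≤ ‖α‖ * ‖(D i).comp (H i)‖ := ContinuousLinearMap.opNorm_smul_le _ _
      _ = α * ‖(D i).comp (H i)‖ := by rw [Real.norm_eq_abs, abs_of_pos hα]
    calc ‖D i - α • (D i).comp (H i) - D0 i‖
        ≤ ‖D i - D0 i‖ + ‖α • (D i).comp (H i)‖ := by
          rw [sub_right_comm]; exact norm_sub_le _ _
    _ ≤ α * L * x i + α * (((1 + α * L) * x i) * L) := by
          exact add_le_add (hDsub i) (le_trans h2 (by nlinarith [h1, hα.le]))
    _ = (2 * α * L + α ^ 2 * L ^ 2) * x i := by ring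
  -- sum of p i * x i bound via Cauchy-Schwarz
  have hS : ∑ i, p i * x i ≤ G + σ := by
    have hCS : (∑ i, p i * ‖gradient (f i) w - gradient favg w‖) ^ 2
        ≤ (∑ i, p i) * ∑ i, p i * ‖gradient (f i) w - gradient favg w‖ ^ 2 := by
      have hcs := Finset.sum_mul_sq_le_sq_mul_sq Finset.univ
        (fun i => Real.sqrt (p i))
        (fun i => Real.sqrt (p i) * ‖gradient (f i) w - gradient favg w‖)
      calc (∑ i, p i * ‖gradient (f i) w - gradient favg w‖) ^ 2
          = (∑ i, Real.sqrt (p i) * (Real.sqrt (p i) * ‖gradient (f i) w - gradient favg w‖)) ^ 2 := by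
            congr 1
            refine Finset.sum_congr rfl fun i _ => ?_
            rw [← mul_assoc, Real.mul_self_sqrt (hp i)]
      _ ≤ (∑ i, Real.sqrt (p i) ^ 2) * ∑ i, (Real.sqrt (p i) * ‖gradient (f i) w - gradient favg w‖) ^ 2 := hcs
      _ = (∑ i, p i) * ∑ i, p i * ‖gradient (f i) w - gradient favg w‖ ^ 2 := by
            congr 1
            · exact Finset.sum_congr rfl fun i _ => Real.sq_sqrt (hp i)
            · refine Finset.sum_congr rfl fun i _ => ?_
              rw [mul_pow, Real.sq_sqrt (hp i)]
    rw [hp1, one_mul] at hCS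
    have hCS2 : (∑ i, p i * ‖gradient (f i) w - gradient favg w‖) ^ 2 ≤ σ ^ 2 :=
      le_trans hCS (hvar w)
    have hSnn : 0 ≤ ∑ i, p i * ‖gradient (f i) w - gradient favg w‖ :=
      Finset.sum_nonneg fun i _ => mul_nonneg (hp i) (norm_nonneg _)
    have hSσ : ∑ i, p i * ‖gradient (f i) w - gradient favg w‖ ≤ σ := by
      nlinarith [hCS2, hSnn, hσ]
    calc ∑ i, p i * x i
        ≤ ∑ i, p i * (‖gradient (f i) w - gradient favg w‖ + G) := by
          refine Finset.sum_le_sum fun i _ => ?_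
          refine mul_le_mul_of_nonneg_left ?_ (hp i)
          calc x i = ‖(gradient (f i) w - gradient favg w) + gradient favg w‖ := by
                rw [sub_add_cancel]
          _ ≤ ‖gradient (f i) w - gradient favg w‖ + ‖gradient favg w‖ := norm_add_le _ _
          _ ≤ ‖gradient (f i) w - gradient favg w‖ + G := by linarith
    _ = (∑ i, p i * ‖gradient (f i) w - gradient favg w‖) + (∑ i, p i) * G := by
          rw [Finset.sum_mul, ← Finset.sum_add_distrib]
          exact Finset.sum_congr rfl fun i _ => by ring
    _ ≤ σ + 1 * G := by rw [hp1]; linarith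
    _ = G + σ := by ring
  -- put it together
  have hmain : ‖fderiv ℝ F w‖ ≤ G + (2 * α * L + α ^ 2 * L ^ 2) * (G + σ) := by
    rw [hFd.fderiv]
    have hsplit : (∑ i, p i • ((D i).comp (ContinuousLinearMap.id ℝ (EuclideanSpace ℝ (Fin d)) - α • H i)))
        = (∑ i, p i • D0 i)
          + ∑ i, p i • ((D i).comp (ContinuousLinearMap.id ℝ (EuclideanSpace ℝ (Fin d)) - α • H i) - D0 i) := by
      rw [← Finset.sum_add_distrib]
      refine Finset.sum_congr rfl fun i _ => ?_
      rw [← smul_add, add_sub_cancel]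
    rw [hsplit]
    have h1 : ‖∑ i, p i • D0 i‖ ≤ G := by
      calc ‖∑ i, p i • D0 i‖ = ‖fderiv ℝ favg w‖ := by rw [hfavgd.fderiv]
      _ = ‖gradient favg w‖ := (grad_norm favg w).symm
      _ ≤ G := hG
    have h2 : ‖∑ i, p i • ((D i).comp (ContinuousLinearMap.id ℝ (EuclideanSpace ℝ (Fin d)) - α • H i) - D0 i)‖
        ≤ (2 * α * L + α ^ 2 * L ^ 2) * (G + σ) := by
      calc ‖∑ i, p i • ((D i).comp (ContinuousLinearMap.id ℝ (EuclideanSpace ℝ (Fin d)) - α • H i) - D0 i)‖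
          ≤ ∑ i, ‖p i • ((D i).comp (ContinuousLinearMap.id ℝ (EuclideanSpace ℝ (Fin d)) - α • H i) - D0 i)‖ :=
            norm_sum_le _ _
      _ ≤ ∑ i, p i * ((2 * α * L + α ^ 2 * L ^ 2) * x i) := by
            refine Finset.sum_le_sum fun i _ => ?_
            calc ‖p i • ((D i).comp (ContinuousLinearMap.id ℝ (EuclideanSpace ℝ (Fin d)) - α • H i) - D0 i)‖
                ≤ ‖p i‖ * ‖(D i).comp (ContinuousLinearMap.id ℝ (EuclideanSpace ℝ (Fin d)) - α • H i) - D0 i‖ :=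
                  ContinuousLinearMap.opNorm_smul_le _ _
            _ = p i * ‖(D i).comp (ContinuousLinearMap.id ℝ (EuclideanSpace ℝ (Fin d)) - α • H i) - D0 i‖ := by
                  rw [Real.norm_eq_abs, abs_of_nonneg (hp i)]
            _ ≤ p i * ((2 * α * L + α ^ 2 * L ^ 2) * x i) :=
                  mul_le_mul_of_nonneg_left (key i) (hp i)
      _ = (2 * α * L + α ^ 2 * L ^ 2) * ∑ i, p i * x i := by
            rw [Finset.mul_sum]
            exact Finset.sum_congr rfl fun i _ => by ring
      _ ≤ (2 * α * L + α ^ 2 * L ^ 2) * (G + σ) :=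
            mul_le_mul_of_nonneg_left hS (by positivity)
    calc ‖(∑ i, p i • D0 i) + _‖ ≤ ‖∑ i, p i • D0 i‖ + _ := norm_add_le _ _
    _ ≤ G + (2 * α * L + α ^ 2 * L ^ 2) * (G + σ) := add_le_add h1 h2
  rw [grad_norm]
  calc ‖fderiv ℝ F w‖ ≤ G + (2 * α * L + α ^ 2 * L ^ 2) * (G + σ) := hmain
  _ = (1 + 2 * α * L + α ^ 2 * L ^ 2) * G + (2 * α * L + α ^ 2 * L ^ 2) * σ := by ring
end

section
/- Let f₁,…,f_M : ℝ^d → ℝ be twice differentiable, L-smooth, with bounded gradient variance E_{i∼p}‖∇f_i(w) - ∇f(w)‖² ≤ σ², where f = E_{i∼p} f_i and F(w) = E_{i∼p} f_i(w - α∇f_i(w)). If 0 < α < 1/(4L), then for any w with ‖∇F(w)‖ ≤ K one has ‖∇f(w)‖ ≤ (1/(1-2αL)) K + (2αL/(1-2αL)) σ ≤ 2K + σ. -/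
open InnerProductSpace ContinuousLinearMap Finset
open scoped InnerProduct RealInnerProductSpace

section Aux
variable {E : Type*} [NormedAddCommGroup E] [InnerProductSpace ℝ E]

lemma key_vec (β : ℝ) (hβ : 0 ≤ β) (x v : E) (hv : ‖v‖ ≤ β * ‖x‖) :
    β * ‖x - v‖ + ‖v + β ^ 2 • x‖ ≤ 2 * β * Real.sqrt (1 + β ^ 2) * ‖x‖ := by
  have h1 : ‖x - v‖ ^ 2 = ‖x‖ ^ 2 - 2 * ⟪x, v⟫_ℝ + ‖v‖ ^ 2 := by
    rw [← @norm_sub_sq_real]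
  have h2 : ‖v + β ^ 2 • x‖ ^ 2 = ‖v‖ ^ 2 + 2 * (β ^ 2 * ⟪x, v⟫_ℝ) + β ^ 4 * ‖x‖ ^ 2 := by
    rw [@norm_add_sq_real, real_inner_smul_right, norm_smul]
    simp [abs_of_nonneg (sq_nonneg β), real_inner_comm]
    ring
  set s := Real.sqrt (1 + β ^ 2) with hs
  have hs0 : 0 ≤ s := Real.sqrt_nonneg _
  have hs2 : s ^ 2 = 1 + β ^ 2 := Real.sq_sqrt (by positivity)
  have hsum : (β * ‖x - v‖) ^ 2 + ‖v + β ^ 2 • x‖ ^ 2 ≤ 2 * β ^ 2 * s ^ 2 * ‖x‖ ^ 2 := by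
    have hv2 : ‖v‖ ^ 2 ≤ β ^ 2 * ‖x‖ ^ 2 := by
      nlinarith [norm_nonneg v, norm_nonneg x]
    nlinarith [h1, h2]
  have ha : 0 ≤ β * ‖x - v‖ := by positivity
  have hb : 0 ≤ ‖v + β ^ 2 • x‖ := norm_nonneg _
  nlinarith [sq_nonneg (β * ‖x - v‖ - ‖v + β ^ 2 • x‖), norm_nonneg x,
    mul_nonneg (mul_nonneg (mul_nonneg (by norm_num : (0:ℝ) ≤ 2) hβ) hs0) (norm_nonneg x),
    sq_nonneg (β * ‖x - v‖ + ‖v + β ^ 2 • x‖ - 2 * β * s * ‖x‖)]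

variable [CompleteSpace E]

lemma grad_contDiff (f : E → ℝ) (hf : ContDiff ℝ 2 f) : ContDiff ℝ 1 (gradient f) := by
  have h := hf.fderiv_right (m := 1) (by norm_num)
  exact ((toDual ℝ E).symm.toContinuousLinearEquiv.contDiff).comp h

lemma hasGradient_comp (f : E → ℝ) (hf : ContDiff ℝ 2 f) (α : ℝ) (w : E) :
    HasGradientAt (fun u => f (u - α • gradient f u))
      (gradient f (w - α • gradient f w)
        - α • (fderiv ℝ (gradient f) w).adjoint (gradient f (w - α • gradient f w))) w := by
  set H := fderiv ℝ (gradient f) w with hH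
  have hgc : ContDiff ℝ 1 (gradient f) := grad_contDiff f hf
  have hgd : DifferentiableAt ℝ (gradient f) w := (hgc.differentiable one_ne_zero).differentiableAt
  have hg : HasFDerivAt (fun u => u - α • gradient f u)
      (ContinuousLinearMap.id ℝ E - α • H) w :=
    (hasFDerivAt_id w).sub (hgd.hasFDerivAt.const_smul α)
  set z := gradient f (w - α • gradient f w) with hz
  have hfd : HasFDerivAt f (toDual ℝ E z) (w - α • gradient f w) := by
    have : DifferentiableAt ℝ f (w - α • gradient f w) :=
      (hf.differentiable (by norm_num)).differentiableAt
    have h2 := this.hasFDerivAt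
    rwa [show toDual ℝ E z = fderiv ℝ f (w - α • gradient f w) from
      (toDual ℝ E).apply_symm_apply _]
  have hcomp := hfd.comp w hg
  rw [hasGradientAt_iff_hasFDerivAt]
  refine hcomp.congr_fderiv ?_
  ext u
  simp only [ContinuousLinearMap.coe_comp', Function.comp_apply, toDual_apply_apply,
    ContinuousLinearMap.sub_apply, ContinuousLinearMap.smul_apply,
    ContinuousLinearMap.coe_id', id_eq]
  rw [inner_sub_left, inner_sub_right, real_inner_smul_left, real_inner_smul_right,
    adjoint_inner_left]

end Aux

set_option maxHeartbeats 2000000 in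
/-- with `0 < α < 1/(4L)`, a bound `‖∇F(w)‖ ≤ K` on the MAML-loss gradient
yields `‖∇f(w)‖ ≤ K/(1-2αL) + 2αLσ/(1-2αL) ≤ 2K + σ`. -/
theorem stmt_4 {d M : ℕ} (f : Fin M → EuclideanSpace ℝ (Fin d) → ℝ) (p : Fin M → ℝ)
    (hp : ∀ i, 0 ≤ p i) (hp1 : ∑ i, p i = 1)
    (L σ α K : ℝ) (hL : 0 < L) (hσ : 0 ≤ σ)
    (hf : ∀ i, ContDiff ℝ 2 (f i))
    (hsmooth : ∀ i, ∀ w u : EuclideanSpace ℝ (Fin d),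
      ‖gradient (f i) w - gradient (f i) u‖ ≤ L * ‖w - u‖)
    (favg : EuclideanSpace ℝ (Fin d) → ℝ) (hfavg : favg = fun w => ∑ i, p i * f i w)
    (hvar : ∀ w : EuclideanSpace ℝ (Fin d),
      ∑ i, p i * ‖gradient (f i) w - gradient favg w‖ ^ 2 ≤ σ ^ 2)
    (F : EuclideanSpace ℝ (Fin d) → ℝ)
    (hF : F = fun w => ∑ i, p i * f i (w - α • gradient (f i) w))
    (hα : 0 < α) (hα2 : α < 1 / (4 * L))
    (w : EuclideanSpace ℝ (Fin d)) (hK : ‖gradient F w‖ ≤ K) :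
    ‖gradient favg w‖ ≤ 1 / (1 - 2 * α * L) * K + (2 * α * L / (1 - 2 * α * L)) * σ ∧
    1 / (1 - 2 * α * L) * K + (2 * α * L / (1 - 2 * α * L)) * σ ≤ 2 * K + σ := by
  set β := α * L with hβ
  have hβ0 : 0 < β := mul_pos hα hL
  have hβ4 : β < 1 / 4 := by
    have h4L : (0:ℝ) < 4 * L := by positivity
    have := (lt_div_iff₀ h4L).mp hα2
    nlinarith
  have hK0 : 0 ≤ K := le_trans (norm_nonneg _) hK
  set x : Fin M → EuclideanSpace ℝ (Fin d) := fun i => gradient (f i) w with hx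
  set z : Fin M → EuclideanSpace ℝ (Fin d) := fun i => gradient (f i) (w - α • x i) with hzdef
  set H : Fin M → (EuclideanSpace ℝ (Fin d) →L[ℝ] EuclideanSpace ℝ (Fin d)) := fun i => fderiv ℝ (gradient (f i)) w with hHdef
  set y : Fin M → EuclideanSpace ℝ (Fin d) := fun i => z i - α • (H i).adjoint (z i) with hydef
  have hyi : ∀ i, HasGradientAt (fun u => f i (u - α • gradient (f i) u)) (y i) w :=
    fun i => hasGradient_comp (f i) (hf i) α w
  -- gradient of F
  have hFg : HasGradientAt F (∑ i, p i • y i) w := by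
    rw [hF, hasGradientAt_iff_hasFDerivAt]
    have hmap : (toDual ℝ (EuclideanSpace ℝ (Fin d))) (∑ i, p i • y i)
        = ∑ i, p i • (toDual ℝ (EuclideanSpace ℝ (Fin d)) (y i)) := by
      rw [map_sum]
      congr 1; ext i
      simp
    rw [hmap]
    exact HasFDerivAt.fun_sum fun i _ => ((hyi i).hasFDerivAt).const_mul (p i)
  -- gradient of favg
  have hxg : ∀ i, HasGradientAt (f i) (x i) w := fun i =>
    ((((hf i).differentiable (by norm_num)).differentiableAt (x := w))).hasGradientAt
  have hfavgg : HasGradientAt favg (∑ i, p i • x i) w := by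
    rw [hfavg, hasGradientAt_iff_hasFDerivAt]
    have hmap : (toDual ℝ (EuclideanSpace ℝ (Fin d))) (∑ i, p i • x i)
        = ∑ i, p i • (toDual ℝ (EuclideanSpace ℝ (Fin d)) (x i)) := by
      rw [map_sum]
      congr 1; ext i
      simp
    rw [hmap]
    exact HasFDerivAt.fun_sum fun i _ => ((hxg i).hasFDerivAt).const_mul (p i)
  set S : EuclideanSpace ℝ (Fin d) := ∑ i, p i • x i with hS
  have hGf : gradient favg w = S := hfavgg.gradient
  have hGF : gradient F w = ∑ i, p i • y i := hFg.gradient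
  set t := 2 * β * Real.sqrt (1 + β ^ 2) with ht
  have hst0 : 0 ≤ Real.sqrt (1 + β ^ 2) := Real.sqrt_nonneg _
  have ht0 : 0 ≤ t := by positivity
  -- per-task bound
  have hnormH : ∀ i, ‖H i‖ ≤ L := fun i =>
    norm_fderiv_le_of_lip' ℝ hL.le
      (Filter.Eventually.of_forall fun u => hsmooth i u w)
  have hkey : ∀ i, ‖(1 + β ^ 2) • x i - y i‖ ≤ t * ‖x i‖ := by
    intro i
    have hv : ‖x i - z i‖ ≤ β * ‖x i‖ := by
      have h := hsmooth i w (w - α • x i)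
      have he : w - (w - α • x i) = α • x i := by abel
      rw [he, norm_smul, Real.norm_eq_abs, abs_of_pos hα] at h
      calc ‖x i - z i‖ ≤ L * (α * ‖x i‖) := h
        _ = β * ‖x i‖ := by ring
    have hAd : ‖α • (H i).adjoint (z i)‖ ≤ β * ‖x i - (x i - z i)‖ := by
      have h1 : ‖(H i).adjoint (z i)‖ ≤ L * ‖z i‖ := by
        calc ‖(H i).adjoint (z i)‖ ≤ ‖(H i).adjoint‖ * ‖z i‖ := (H i).adjoint.le_opNorm _
          _ ≤ L * ‖z i‖ := by
              have : ‖(H i).adjoint‖ = ‖H i‖ :=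
                (ContinuousLinearMap.adjoint (𝕜 := ℝ) (E := EuclideanSpace ℝ (Fin d))
                  (F := EuclideanSpace ℝ (Fin d))).norm_map (H i)
              rw [this]
              exact mul_le_mul_of_nonneg_right (hnormH i) (norm_nonneg _)
      have he : x i - (x i - z i) = z i := by abel
      rw [he, norm_smul, Real.norm_eq_abs, abs_of_pos hα]
      calc α * ‖(H i).adjoint (z i)‖ ≤ α * (L * ‖z i‖) :=
            mul_le_mul_of_nonneg_left h1 hα.le
        _ = β * ‖z i‖ := by ring
    have hsplit : (1 + β ^ 2) • x i - y i
        = ((x i - z i) + β ^ 2 • x i) + α • (H i).adjoint (z i) := by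
      rw [hydef]
      simp only
      rw [add_smul, one_smul]
      abel
    calc ‖(1 + β ^ 2) • x i - y i‖
        ≤ ‖(x i - z i) + β ^ 2 • x i‖ + ‖α • (H i).adjoint (z i)‖ := by
          rw [hsplit]; exact norm_add_le _ _
      _ ≤ ‖(x i - z i) + β ^ 2 • x i‖ + β * ‖x i - (x i - z i)‖ := by linarith [hAd]
      _ ≤ t * ‖x i‖ := by
          have := key_vec β hβ0.le (x i) (x i - z i) hv
          rw [ht]; linarith
  -- assemble
  have hsplit2 : (1 + β ^ 2) • S - gradient F w = ∑ i, p i • ((1 + β ^ 2) • x i - y i) := by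
    rw [hGF, hS, Finset.smul_sum, ← Finset.sum_sub_distrib]
    apply Finset.sum_congr rfl
    intro i _
    module
  have hnorm1 : ‖(1 + β ^ 2) • S - gradient F w‖ ≤ t * ∑ i, p i * ‖x i‖ := by
    rw [hsplit2]
    calc ‖∑ i, p i • ((1 + β ^ 2) • x i - y i)‖
        ≤ ∑ i, ‖p i • ((1 + β ^ 2) • x i - y i)‖ := norm_sum_le _ _
      _ ≤ ∑ i, p i * (t * ‖x i‖) := by
          apply Finset.sum_le_sum
          intro i _
          rw [norm_smul, Real.norm_eq_abs, abs_of_nonneg (hp i)]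
          exact mul_le_mul_of_nonneg_left (hkey i) (hp i)
      _ = t * ∑ i, p i * ‖x i‖ := by rw [Finset.mul_sum]; congr 1; ext i; ring
  have hCS : ∑ i, p i * ‖x i - S‖ ≤ σ := by
    have hvarw := hvar w
    rw [hGf] at hvarw
    have hsq : (∑ i, p i * ‖x i - S‖) ^ 2 ≤ (∑ i, p i) * ∑ i, p i * ‖x i - S‖ ^ 2 := by
      apply Finset.sum_sq_le_sum_mul_sum_of_sq_eq_mul
      · exact fun i _ => hp i
      · exact fun i _ => mul_nonneg (hp i) (sq_nonneg _)
      · intro i _; ring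
    rw [hp1, one_mul] at hsq
    have h1 : (∑ i, p i * ‖x i - S‖) ^ 2 ≤ σ ^ 2 := le_trans hsq hvarw
    have h2 : 0 ≤ ∑ i, p i * ‖x i - S‖ :=
      Finset.sum_nonneg fun i _ => mul_nonneg (hp i) (norm_nonneg _)
    nlinarith
  have hxsum : ∑ i, p i * ‖x i‖ ≤ σ + ‖S‖ := by
    have : ∑ i, p i * ‖x i‖ ≤ ∑ i, (p i * ‖x i - S‖ + p i * ‖S‖) := by
      apply Finset.sum_le_sum
      intro i _
      have h5 : ‖x i‖ ≤ ‖x i - S‖ + ‖S‖ := by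
        calc ‖x i‖ = ‖(x i - S) + S‖ := by rw [sub_add_cancel]
          _ ≤ ‖x i - S‖ + ‖S‖ := norm_add_le _ _
      calc p i * ‖x i‖ ≤ p i * (‖x i - S‖ + ‖S‖) := mul_le_mul_of_nonneg_left h5 (hp i)
        _ = p i * ‖x i - S‖ + p i * ‖S‖ := by ring
    rw [Finset.sum_add_distrib, ← Finset.sum_mul, hp1, one_mul] at this
    linarith
  -- main inequality
  have hmain : (1 + β ^ 2 - t) * ‖S‖ ≤ K + t * σ := by
    have h1 : (1 + β ^ 2) * ‖S‖ = ‖(1 + β ^ 2) • S‖ := by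
      rw [norm_smul, Real.norm_eq_abs, abs_of_pos (by positivity)]
    have h2 : ‖(1 + β ^ 2) • S‖ ≤ ‖gradient F w‖ + ‖(1 + β ^ 2) • S - gradient F w‖ := by
      have := norm_add_le (gradient F w) ((1 + β ^ 2) • S - gradient F w)
      simpa using this
    have h3 := hnorm1
    have h4 : t * ∑ i, p i * ‖x i‖ ≤ t * (σ + ‖S‖) :=
      mul_le_mul_of_nonneg_left hxsum ht0
    nlinarith [hK]
  -- arithmetic with sqrt
  have hs2 : Real.sqrt (1 + β ^ 2) ^ 2 = 1 + β ^ 2 := Real.sq_sqrt (by positivity)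
  have hsle : Real.sqrt (1 + β ^ 2) ≤ 1 + β ^ 2 / 2 := by
    rw [show (1:ℝ) + β ^ 2 / 2 = Real.sqrt ((1 + β ^ 2 / 2) ^ 2) from
      (Real.sqrt_sq (by positivity)).symm]
    apply Real.sqrt_le_sqrt
    nlinarith [sq_nonneg β]
  have hct : 1 - 2 * β ≤ 1 + β ^ 2 - t := by
    rw [ht]
    nlinarith [hβ0.le, hβ4]
  have htc : t ≤ 2 * β * (1 + β ^ 2) := by
    rw [ht]
    nlinarith [hβ0.le]
  have h12β : 0 < 1 - 2 * β := by linarith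
  have hctpos : 0 < 1 + β ^ 2 - t := lt_of_lt_of_le h12β hct
  have hX0 : 0 ≤ ‖S‖ := norm_nonneg _
  have hfinal : (1 - 2 * β) * ‖S‖ ≤ K + 2 * β * σ := by
    have e1 : (1 - 2 * β) * ((1 + β ^ 2 - t) * ‖S‖) ≤ (1 - 2 * β) * (K + t * σ) :=
      mul_le_mul_of_nonneg_left hmain h12β.le
    have e2 : (1 - 2 * β) * (K + t * σ) ≤ (1 + β ^ 2 - t) * (K + 2 * β * σ) := by
      nlinarith [mul_nonneg hK0 (by linarith : (0:ℝ) ≤ (1 + β ^ 2 - t) - (1 - 2 * β)),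
        mul_nonneg hσ (by linarith : (0:ℝ) ≤ 2 * β * (1 + β ^ 2) - t)]
    have e3 : (1 + β ^ 2 - t) * ((1 - 2 * β) * ‖S‖) ≤ (1 + β ^ 2 - t) * (K + 2 * β * σ) := by
      nlinarith
    exact le_of_mul_le_mul_left e3 hctpos
  rw [hGf]
  have hgoal1 : ‖S‖ ≤ 1 / (1 - 2 * β) * K + 2 * β / (1 - 2 * β) * σ := by
    rw [show 1 / (1 - 2 * β) * K + 2 * β / (1 - 2 * β) * σ
        = (K + 2 * β * σ) / (1 - 2 * β) by field_simp]
    rw [le_div_iff₀ h12β, mul_comm]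
    exact hfinal
  constructor
  · have : 2 * α * L = 2 * β := by rw [hβ]; ring
    rw [this]
    exact hgoal1
  · have : 2 * α * L = 2 * β := by rw [hβ]; ring
    rw [this]
    rw [show 1 / (1 - 2 * β) * K + 2 * β / (1 - 2 * β) * σ
        = (K + 2 * β * σ) / (1 - 2 * β) by field_simp]
    rw [div_le_iff₀ h12β]
    nlinarith [mul_nonneg (add_nonneg hK0 hσ) (by linarith : (0:ℝ) ≤ 1 - 4 * β)]
end

section
/- Let f : ℝ^d → ℝ be twice continuously differentiable, μ-strongly convex, L-smooth, with κ-Lipschitz Hessian. Let G > 0 and suppose 0 < α ≤ min{1/(2L), μ/(8κG)}. Define F(w) = f(w - α∇f(w)). Then for all w, u with ‖∇f(w)‖ ≤ G and ‖∇f(u)‖ ≤ G, one has (μ/8)‖w - u‖ ≤ ‖∇F(w) - ∇F(u)‖ ≤ (9L/8)‖w - u‖. -/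
open scoped RealInnerProductSpace
open Set

section Aux

variable {E : Type*} [NormedAddCommGroup E] [InnerProductSpace ℝ E]

/-- If the quadratic form of `A` is bounded below by `c‖v‖²`, then `‖A v‖ ≥ c‖v‖`. -/
lemma aux_norm_ge (A : E →L[ℝ] E) (c : ℝ) (h : ∀ v, c * ‖v‖ ^ 2 ≤ ⟪A v, v⟫) (v : E) :
    c * ‖v‖ ≤ ‖A v‖ := by
  rcases eq_or_ne v 0 with rfl | hv
  · simp
  · have h1 : c * ‖v‖ ^ 2 ≤ ‖A v‖ * ‖v‖ := (h v).trans (real_inner_le_norm _ _)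
    have hv' : 0 < ‖v‖ := norm_pos_iff.mpr hv
    nlinarith

/-- A symmetric operator with `|⟪Av,v⟫| ≤ C‖v‖²` has norm at most `C`. -/
lemma aux_norm_le (A : E →L[ℝ] E) (C : ℝ) (hC : 0 ≤ C)
    (hsym : ∀ v y, ⟪A v, y⟫ = ⟪A y, v⟫)
    (h : ∀ v, |⟪A v, v⟫| ≤ C * ‖v‖ ^ 2) : ‖A‖ ≤ C := by
  apply ContinuousLinearMap.opNorm_le_bound _ hC
  intro v
  rcases eq_or_ne (A v) 0 with h0 | h0
  · rw [h0, norm_zero]; positivity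
  · have hAv : 0 < ‖A v‖ := norm_pos_iff.mpr h0
    have hv : 0 < ‖v‖ := by
      rcases eq_or_ne v 0 with rfl | hv
      · simp at h0
      · exact norm_pos_iff.mpr hv
    set y : E := (‖v‖ / ‖A v‖) • A v with hy
    have hyn : ‖y‖ = ‖v‖ := by
      rw [hy, norm_smul, norm_div, norm_norm, norm_norm, div_mul_cancel₀ _ hAv.ne']
    have hinner : ⟪A v, y⟫ = ‖v‖ * ‖A v‖ := by
      rw [hy, real_inner_smul_right, real_inner_self_eq_norm_sq]
      field_simp
    have e1 : ⟪A (v + y), v + y⟫ - ⟪A (v - y), v - y⟫ = 4 * ⟪A v, y⟫ := by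
      simp only [map_add, map_sub, inner_add_left, inner_add_right, inner_sub_left,
        inner_sub_right]
      linear_combination (2 : ℝ) * hsym y v
    have b1 := (abs_le.mp (h (v + y))).2
    have b2 := (abs_le.mp (h (v - y))).1
    have par1 : ‖v + y‖ ^ 2 = ‖v‖ ^ 2 + 2 * ⟪v, y⟫ + ‖y‖ ^ 2 := by
      rw [← real_inner_self_eq_norm_sq, ← real_inner_self_eq_norm_sq, ← real_inner_self_eq_norm_sq]
      rw [inner_add_left, inner_add_right, inner_add_right, real_inner_comm y v]; ring
    have par2 : ‖v - y‖ ^ 2 = ‖v‖ ^ 2 - 2 * ⟪v, y⟫ + ‖y‖ ^ 2 := by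
      rw [← real_inner_self_eq_norm_sq, ← real_inner_self_eq_norm_sq, ← real_inner_self_eq_norm_sq]
      rw [inner_sub_left, inner_sub_right, inner_sub_right, real_inner_comm y v]; ring
    have hyn2 : ‖y‖ ^ 2 = ‖v‖ ^ 2 := by rw [hyn]
    have h4 : 4 * (‖v‖ * ‖A v‖) ≤ C * (4 * ‖v‖ ^ 2) := by nlinarith
    have h5 : ‖A v‖ * ‖v‖ ≤ (C * ‖v‖) * ‖v‖ := by nlinarith
    exact le_of_mul_le_mul_right h5 hv

/-- MVT-style monotonicity bounds for a map whose derivative has quadratic form bounds. -/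
lemma aux_inner_bounds (g : E → E) (H : E → (E →L[ℝ] E)) (hg : ∀ x, HasFDerivAt g (H x) x)
    (a b : ℝ) (hqa : ∀ x v, a * ‖v‖ ^ 2 ≤ ⟪H x v, v⟫) (hqb : ∀ x v, ⟪H x v, v⟫ ≤ b * ‖v‖ ^ 2)
    (x y : E) : a * ‖x - y‖ ^ 2 ≤ ⟪g x - g y, x - y⟫ ∧ ⟪g x - g y, x - y⟫ ≤ b * ‖x - y‖ ^ 2 := by
  set v := x - y with hv
  set c : ℝ → E := fun t => y + t • v with hc
  have hcd : ∀ t : ℝ, HasDerivAt c v t := fun t => by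
    simpa [hc] using ((hasDerivAt_id t).smul_const v).const_add y
  set ψ : ℝ → ℝ := fun t => ⟪g (c t), v⟫ with hψdef
  have hψ : ∀ t : ℝ, HasDerivAt ψ ⟪H (c t) v, v⟫ t := by
    intro t
    have h1 : HasDerivAt (fun s => g (c s)) ((H (c t)) v) t :=
      (hg (c t)).comp_hasDerivAt t (hcd t)
    have h2 := HasDerivAt.inner ℝ h1 (hasDerivAt_const t v)
    simpa using h2
  obtain ⟨s, _, hs⟩ := exists_hasDerivAt_eq_slope ψ (fun t => ⟪H (c t) v, v⟫) one_pos
    (fun t _ => (hψ t).continuousAt.continuousWithinAt) (fun t _ => hψ t)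
  have hc1 : c 1 = x := by simp [hc, hv]
  have hc0 : c 0 = y := by simp [hc]
  have hval : ⟪g x - g y, v⟫ = ⟪H (c s) v, v⟫ := by
    rw [hs]; simp [hψdef, hc1, hc0, inner_sub_left]
  exact ⟨hval ▸ hqa (c s) v, hval ▸ hqb (c s) v⟩

end Aux

set_option maxHeartbeats 2000000 in
/-- for `f` `μ`-strongly convex, `L`-smooth, with `κ`-Lipschitz Hessian,
`0 < α ≤ min{1/(2L), μ/(8κG)}`, the MAML-loss gradient is bi-Lipschitz on the region
`‖∇f‖ ≤ G`: `(μ/8)‖w - u‖ ≤ ‖∇F(w) - ∇F(u)‖ ≤ (9L/8)‖w - u‖`. -/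
theorem stmt_5 {d : ℕ} (f : EuclideanSpace ℝ (Fin d) → ℝ) (μ L κ G α : ℝ)
    (hμ : 0 < μ) (hL : 0 < L) (hκ : 0 < κ) (hG : 0 < G)
    (hf : ContDiff ℝ 2 f)
    (hsc : ∀ w v : EuclideanSpace ℝ (Fin d),
      μ * ‖v‖ ^ 2 ≤ ⟪(fderiv ℝ (gradient f) w) v, v⟫)
    (hsm : ∀ w v : EuclideanSpace ℝ (Fin d),
      ⟪(fderiv ℝ (gradient f) w) v, v⟫ ≤ L * ‖v‖ ^ 2)
    (hhess : ∀ w u : EuclideanSpace ℝ (Fin d),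
      ‖fderiv ℝ (gradient f) w - fderiv ℝ (gradient f) u‖ ≤ κ * ‖w - u‖)
    (hα : 0 < α) (hα2 : α ≤ min (1 / (2 * L)) (μ / (8 * κ * G)))
    (F : EuclideanSpace ℝ (Fin d) → ℝ) (hF : F = fun u => f (u - α • gradient f u))
    (w u : EuclideanSpace ℝ (Fin d)) (hw : ‖gradient f w‖ ≤ G) (hu : ‖gradient f u‖ ≤ G) :
    μ / 8 * ‖w - u‖ ≤ ‖gradient F w - gradient F u‖ ∧
    ‖gradient F w - gradient F u‖ ≤ 9 * L / 8 * ‖w - u‖ := by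
  rcases eq_or_ne w u with rfl | hwu
  · simp
  have hwu' : (0 : ℝ) < ‖w - u‖ := by
    rw [norm_pos_iff, sub_ne_zero]; exact hwu
  -- scalar consequences of the step-size bound
  obtain ⟨ha1, ha2⟩ := le_min_iff.mp hα2
  have hαL : α * L ≤ 1 / 2 := by
    rw [le_div_iff₀ (by positivity)] at ha1
    nlinarith
  have hακG : α * κ * G ≤ μ / 8 := by
    rw [le_div_iff₀ (by positivity)] at ha2
    nlinarith
  have hμL : μ ≤ L := by
    have h1 := hsc w (w - u)
    have h2 := hsm w (w - u)
    have hsq : (0:ℝ) < ‖w - u‖ ^ 2 := by positivity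
    nlinarith
  have hαμ : α * μ ≤ α * L := by nlinarith
  -- differentiability of the gradient
  have hfdiff : Differentiable ℝ f := hf.differentiable (by norm_num)
  have hfd : ∀ z, HasFDerivAt f (fderiv ℝ f z) z := fun z => (hfdiff z).hasFDerivAt
  have hf'c : ContDiff ℝ 1 (fderiv ℝ f) := hf.fderiv_right (by norm_num)
  have hf'diff : Differentiable ℝ (fderiv ℝ f) := hf'c.differentiable (by norm_num)
  have hgdiff : Differentiable ℝ (gradient f) := by
    have h : gradient f = fun z =>
        (InnerProductSpace.toDual ℝ (EuclideanSpace ℝ (Fin d))).symm (fderiv ℝ f z) := rfl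
    rw [h]
    exact (InnerProductSpace.toDual ℝ
      (EuclideanSpace ℝ (Fin d))).symm.toContinuousLinearEquiv.differentiable.comp hf'diff
  have hd : ∀ z, HasFDerivAt (gradient f) (fderiv ℝ (gradient f) z) z :=
    fun z => (hgdiff z).hasFDerivAt
  -- symmetry of the Hessian
  have Hsym : ∀ x v y, ⟪fderiv ℝ (gradient f) x v, y⟫ = ⟪fderiv ℝ (gradient f) x y, v⟫ := by
    intro x
    have happ : ∀ v y, ⟪fderiv ℝ (gradient f) x v, y⟫ = fderiv ℝ (fderiv ℝ f) x v y := by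
      intro v y
      have h1 : HasFDerivAt (fun z => ⟪gradient f z, y⟫)
          ((fderivInnerCLM ℝ (gradient f x, y)).comp ((fderiv ℝ (gradient f) x).prod 0)) x :=
        (hd x).inner ℝ (hasFDerivAt_const y x)
      have h2 : HasFDerivAt (fun z => (fderiv ℝ f z) y)
          ((ContinuousLinearMap.apply ℝ ℝ y).comp (fderiv ℝ (fderiv ℝ f) x)) x :=
        (ContinuousLinearMap.apply ℝ ℝ y).hasFDerivAt.comp x (hf'diff x).hasFDerivAt
      have heq : (fun z => ⟪gradient f z, y⟫) = fun z => (fderiv ℝ f z) y := by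
        funext z
        exact InnerProductSpace.toDual_symm_apply
      rw [heq] at h1
      have h3 := h1.unique h2
      have h4 := congrFun (congrArg DFunLike.coe h3) v
      simpa using h4
    have hsym2 : ∀ v y, fderiv ℝ (fderiv ℝ f) x v y = fderiv ℝ (fderiv ℝ f) x y v :=
      second_derivative_symmetric hfd (hf'diff x).hasFDerivAt
    intro v y
    rw [happ, happ, hsym2]
  -- the operator B x = I - α ∇²f(x)
  set B : EuclideanSpace ℝ (Fin d) → EuclideanSpace ℝ (Fin d) →L[ℝ] EuclideanSpace ℝ (Fin d) :=
    fun x => ContinuousLinearMap.id ℝ _ - α • fderiv ℝ (gradient f) x with hBdef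
  have hBapp : ∀ x v, B x v = v - α • (fderiv ℝ (gradient f) x v) := by
    intro x v
    simp [hBdef]
  have hBq : ∀ x v, ⟪B x v, v⟫ = ‖v‖ ^ 2 - α * ⟪fderiv ℝ (gradient f) x v, v⟫ := by
    intro x v
    rw [hBapp, inner_sub_left, real_inner_smul_left, real_inner_self_eq_norm_sq]
  have hBlow : ∀ x v, (1 - α * L) * ‖v‖ ^ 2 ≤ ⟪B x v, v⟫ := by
    intro x v
    rw [hBq]
    nlinarith [hsm x v, hα.le, sq_nonneg ‖v‖]
  have hBup : ∀ x v, ⟪B x v, v⟫ ≤ (1 - α * μ) * ‖v‖ ^ 2 := by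
    intro x v
    rw [hBq]
    nlinarith [hsc x v, hα.le, sq_nonneg ‖v‖]
  have hBsym : ∀ x v y, ⟪B x v, y⟫ = ⟪B x y, v⟫ := by
    intro x v y
    rw [hBapp, hBapp, inner_sub_left, inner_sub_left, real_inner_smul_left,
      real_inner_smul_left, Hsym x v y, real_inner_comm v y]
  have hBnorm : ∀ x, ‖B x‖ ≤ 1 - α * μ := by
    intro x
    refine aux_norm_le _ _ (by nlinarith) (hBsym x) (fun v => abs_le.mpr ⟨?_, hBup x v⟩)
    have := hBlow x v
    nlinarith [sq_nonneg ‖v‖]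
  have h1le : 1 - α * μ ≤ (1 : ℝ) := by nlinarith
  have hBnorm1 : ∀ x, ‖B x‖ ≤ 1 := fun x => (hBnorm x).trans h1le
  have hHnorm : ∀ x, ‖fderiv ℝ (gradient f) x‖ ≤ L := by
    intro x
    refine aux_norm_le _ _ hL.le (Hsym x) (fun v => abs_le.mpr ⟨?_, hsm x v⟩)
    have := hsc x v
    nlinarith [sq_nonneg ‖v‖]
  -- Lipschitz bound for the gradient
  have hgLip : ∀ x y : EuclideanSpace ℝ (Fin d),
      ‖gradient f x - gradient f y‖ ≤ L * ‖x - y‖ := by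
    intro x y
    exact convex_univ.norm_image_sub_le_of_norm_hasFDerivWithin_le
      (fun z _ => (hd z).hasFDerivWithinAt) (fun z _ => hHnorm z) (mem_univ y) (mem_univ x)
  -- the inner step map T
  set T : EuclideanSpace ℝ (Fin d) → EuclideanSpace ℝ (Fin d) :=
    fun x => x - α • gradient f x with hTdef
  have hTd : ∀ x, HasFDerivAt T (B x) x := by
    intro x
    exact (hasFDerivAt_id x).sub ((hd x).const_smul α)
  have hTLip : ∀ x y : EuclideanSpace ℝ (Fin d), ‖T x - T y‖ ≤ 1 * ‖x - y‖ := by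
    intro x y
    exact convex_univ.norm_image_sub_le_of_norm_hasFDerivWithin_le
      (fun z _ => (hTd z).hasFDerivWithinAt) (fun z _ => hBnorm1 z) (mem_univ y) (mem_univ x)
  -- the gradient does not grow along a gradient step
  have hgT : ∀ x : EuclideanSpace ℝ (Fin d),
      ‖gradient f x‖ ≤ G → ‖gradient f (T x)‖ ≤ G := by
    intro x hx
    set p : EuclideanSpace ℝ (Fin d) → EuclideanSpace ℝ (Fin d) :=
      fun z => α • gradient f z - z with hpdef
    have hpd : ∀ z, HasFDerivAt p (α • fderiv ℝ (gradient f) z - ContinuousLinearMap.id ℝ _) z :=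
      fun z => ((hd z).const_smul α).sub (hasFDerivAt_id z)
    have hpnorm : ∀ z, ‖α • fderiv ℝ (gradient f) z - ContinuousLinearMap.id ℝ
        (EuclideanSpace ℝ (Fin d))‖ ≤ 1 := by
      intro z
      rw [← neg_sub, norm_neg]
      exact hBnorm1 z
    have hpLip : ‖p (T x) - p x‖ ≤ 1 * ‖T x - x‖ :=
      convex_univ.norm_image_sub_le_of_norm_hasFDerivWithin_le
        (fun z _ => (hpd z).hasFDerivWithinAt) (fun z _ => hpnorm z) (mem_univ x) (mem_univ (T x))
    have hps : p (T x) - p x = α • gradient f (T x) := by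
      simp only [hpdef, hTdef]
      abel
    have hTx : T x - x = -(α • gradient f x) := by
      simp only [hTdef]
      abel
    rw [hps, hTx, norm_neg, norm_smul, norm_smul, Real.norm_eq_abs, abs_of_pos hα,
      one_mul] at hpLip
    have := mul_le_mul_of_nonneg_left hx hα.le
    have h6 : α * ‖gradient f (T x)‖ ≤ α * G := le_trans hpLip this
    exact le_of_mul_le_mul_left h6 hα
  -- the gradient of F
  have hgradF : ∀ x, gradient F x = B x (gradient f (T x)) := by
    intro x
    have hFd : HasFDerivAt F ((fderiv ℝ f (T x)).comp (B x)) x := by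
      rw [hF]
      exact HasFDerivAt.comp x (hfd (T x)) (hTd x)
    have hkey : InnerProductSpace.toDual ℝ (EuclideanSpace ℝ (Fin d))
        (B x (gradient f (T x))) = (fderiv ℝ f (T x)).comp (B x) := by
      ext v
      rw [InnerProductSpace.toDual_apply_apply, hBsym x _ v, real_inner_comm]
      exact InnerProductSpace.toDual_symm_apply
    have hGr : HasGradientAt F (B x (gradient f (T x))) x := by
      rw [hasGradientAt_iff_hasFDerivAt, hkey]
      exact hFd
    exact hGr.gradient
  -- monotonicity bounds
  have hmono := aux_inner_bounds (gradient f) (fderiv ℝ (gradient f)) hd μ L hsc hsm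
  -- lower bound on ‖T w - T u‖
  have hTsub : T w - T u = (w - u) - α • (gradient f w - gradient f u) := by
    simp only [hTdef, smul_sub]
    abel
  have hTip : ⟪T w - T u, w - u⟫ =
      ‖w - u‖ ^ 2 - α * ⟪gradient f w - gradient f u, w - u⟫ := by
    rw [hTsub, inner_sub_left, real_inner_smul_left, real_inner_self_eq_norm_sq]
  have hTlow : (1 - α * L) * ‖w - u‖ ≤ ‖T w - T u‖ := by
    have h1 := (hmono w u).2
    have h2 : (1 - α * L) * ‖w - u‖ ^ 2 ≤ ⟪T w - T u, w - u⟫ := by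
      rw [hTip]
      nlinarith [hα.le]
    have h3 := (real_inner_le_norm (T w - T u) (w - u)).trans
      (le_refl (‖T w - T u‖ * ‖w - u‖))
    nlinarith [h2.trans (real_inner_le_norm _ _)]
  -- lower bound on ‖D‖ where D = ∇f(Tw) - ∇f(Tu)
  have hDlow : μ * ‖T w - T u‖ ≤ ‖gradient f (T w) - gradient f (T u)‖ := by
    rcases eq_or_ne (T w) (T u) with he | hne
    · rw [he, sub_self, norm_zero, mul_zero]
      exact norm_nonneg _
    · have hTn : (0 : ℝ) < ‖T w - T u‖ := by
        rw [norm_pos_iff, sub_ne_zero]; exact hne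
      have h1 := (hmono (T w) (T u)).1
      nlinarith [h1.trans (real_inner_le_norm (gradient f (T w) - gradient f (T u)) (T w - T u))]
  -- lower bound through B w
  have hBD : (1 - α * L) * ‖gradient f (T w) - gradient f (T u)‖ ≤
      ‖B w (gradient f (T w) - gradient f (T u))‖ :=
    aux_norm_ge (B w) (1 - α * L) (hBlow w) _
  have hBDlow : μ / 4 * ‖w - u‖ ≤ ‖B w (gradient f (T w) - gradient f (T u))‖ := by
    have hhalf : (1 : ℝ) / 2 ≤ 1 - α * L := by linarith
    have s1 : μ / 2 * ‖w - u‖ ≤ μ * ‖T w - T u‖ := by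
      nlinarith [mul_le_mul_of_nonneg_left hTlow hμ.le,
        mul_nonneg (mul_nonneg hμ.le hwu'.le) (by linarith : (0:ℝ) ≤ 1 / 2 - α * L)]
    have s2 : μ / 2 * ‖w - u‖ ≤ ‖gradient f (T w) - gradient f (T u)‖ := s1.trans hDlow
    nlinarith [norm_nonneg (gradient f (T w) - gradient f (T u)), hwu'.le]
  -- upper bound through B w
  have hBDup : ‖B w (gradient f (T w) - gradient f (T u))‖ ≤ L * ‖w - u‖ := by
    have h1 := (B w).le_opNorm (gradient f (T w) - gradient f (T u))
    have h2 := hgLip (T w) (T u)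
    have h3 := hTLip w u
    have h4 := hBnorm1 w
    have h5 : ‖gradient f (T w) - gradient f (T u)‖ ≤ L * ‖w - u‖ := by nlinarith [norm_nonneg (T w - T u), norm_nonneg (w - u)]
    nlinarith [norm_nonneg (B w), norm_nonneg (gradient f (T w) - gradient f (T u))]
  -- the error term
  have hE2 : ‖α • ((fderiv ℝ (gradient f) u - fderiv ℝ (gradient f) w) (gradient f (T u)))‖ ≤
      μ / 8 * ‖w - u‖ := by
    rw [norm_smul, Real.norm_eq_abs, abs_of_pos hα]
    have h1 := (fderiv ℝ (gradient f) u - fderiv ℝ (gradient f) w).le_opNorm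
      (gradient f (T u))
    have h2 := hhess u w
    have h3 : ‖gradient f (T u)‖ ≤ G := hgT u hu
    have h4 : ‖u - w‖ = ‖w - u‖ := norm_sub_rev u w
    rw [h4] at h2
    have h5 : ‖(fderiv ℝ (gradient f) u - fderiv ℝ (gradient f) w) (gradient f (T u))‖ ≤
        (κ * ‖w - u‖) * G := by
      calc ‖(fderiv ℝ (gradient f) u - fderiv ℝ (gradient f) w) (gradient f (T u))‖
          ≤ ‖fderiv ℝ (gradient f) u - fderiv ℝ (gradient f) w‖ * ‖gradient f (T u)‖ := h1
        _ ≤ (κ * ‖w - u‖) * G := by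
            apply mul_le_mul h2 h3 (norm_nonneg _)
            positivity
    nlinarith [norm_nonneg (gradient f (T u)), hwu'.le, hα.le]
  -- the decomposition
  have hsplit : gradient F w - gradient F u =
      B w (gradient f (T w) - gradient f (T u)) +
        α • ((fderiv ℝ (gradient f) u - fderiv ℝ (gradient f) w) (gradient f (T u))) := by
    rw [hgradF w, hgradF u]
    simp only [hBdef, ContinuousLinearMap.sub_apply, ContinuousLinearMap.coe_id', id_eq,
      ContinuousLinearMap.smul_apply, map_sub, smul_sub]
    abel
  set X := B w (gradient f (T w) - gradient f (T u)) with hX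
  set Y := α • ((fderiv ℝ (gradient f) u - fderiv ℝ (gradient f) w) (gradient f (T u))) with hY
  constructor
  · have h1 : ‖X‖ ≤ ‖gradient F w - gradient F u‖ + ‖Y‖ := by
      calc ‖X‖ = ‖(X + Y) - Y‖ := by rw [add_sub_cancel_right]
        _ ≤ ‖X + Y‖ + ‖Y‖ := norm_sub_le _ _
        _ = ‖gradient F w - gradient F u‖ + ‖Y‖ := by rw [← hsplit]
    linarith
  · rw [hsplit]
    have h1 : ‖X + Y‖ ≤ ‖X‖ + ‖Y‖ := norm_add_le _ _
    have h2 : μ / 8 * ‖w - u‖ ≤ L / 8 * ‖w - u‖ := by nlinarith [hwu'.le]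
    calc ‖X + Y‖ ≤ ‖X‖ + ‖Y‖ := h1
      _ ≤ L * ‖w - u‖ + μ / 8 * ‖w - u‖ := add_le_add hBDup hE2
      _ ≤ 9 * L / 8 * ‖w - u‖ := by linarith
end

section
/- Let f₁,…,f_M : ℝ^d → ℝ be twice differentiable and L-smooth with gradient variance bound E_{i∼p}‖∇f_i(w) - ∇f(w)‖² ≤ σ², where f = E_{i∼p} f_i. Let F(w) = E_{i∼p} f_i(w - α∇f_i(w)) with 0 < α ≤ 1/L. Then for every w, ‖∇F(w)‖ ≤ σ + ‖∇f(w)‖. -/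
open scoped RealInnerProductSpace

section Aux
variable {E : Type*} [NormedAddCommGroup E] [InnerProductSpace ℝ E] [CompleteSpace E]

lemma fderiv_apply_eq_inner_gradient (f : E → ℝ) (x v : E) :
    fderiv ℝ f x v = ⟪gradient f x, v⟫ := by
  simp [gradient]

lemma norm_fderiv_sub_eq (f : E → ℝ) (x y : E) :
    ‖fderiv ℝ f x - fderiv ℝ f y‖ = ‖gradient f x - gradient f y‖ := by
  rw [gradient, gradient, ← LinearIsometryEquiv.norm_map (InnerProductSpace.toDual ℝ E).symm]
  simp

lemma convex_first_order {f : E → ℝ} (hf : Differentiable ℝ f)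
    (hc : ConvexOn ℝ Set.univ f) (x z : E) :
    f x + ⟪gradient f x, z - x⟫ ≤ f z := by
  set v := z - x with hv
  set g : ℝ → ℝ := fun t => f (x + t • v) with hg
  have hline : ∀ t : ℝ, HasDerivAt (fun s : ℝ => x + s • v) v t := by
    intro t
    simpa using ((hasDerivAt_id t).smul_const v).const_add x
  have hgd : ∀ t : ℝ, HasDerivAt g (⟪gradient f (x + t • v), v⟫) t := by
    intro t
    have hfd := (hf (x + t • v)).hasFDerivAt
    have := hfd.comp_hasDerivAt t (hline t)
    rw [← fderiv_apply_eq_inner_gradient]; exact this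
  have hconvg : ConvexOn ℝ Set.univ g := by
    have : g = f ∘ (AffineMap.lineMap x z : ℝ →ᵃ[ℝ] E) := by
      funext t
      show f (x + t • v) = f (AffineMap.lineMap x z t)
      congr 1
      simp only [AffineMap.lineMap_apply, vsub_eq_sub, vadd_eq_add, hv]
      module
    rw [this]
    have := hc.comp_affineMap (AffineMap.lineMap x z : ℝ →ᵃ[ℝ] E)
    simpa using this
  have h01 : (0:ℝ) < 1 := one_pos
  have := hconvg.deriv_le_slope (Set.mem_univ (0:ℝ)) (Set.mem_univ (1:ℝ)) h01
  rw [(hgd 0).deriv] at this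
  have hslope : slope g 0 1 = g 1 - g 0 := by simp [slope]
  rw [hslope] at this
  have hg0 : g 0 = f x := by simp [hg]
  have hg1 : g 1 = f z := by simp [hg, hv]
  have h2 := this ((hgd 0).differentiableAt)
  rw [hg0, hg1] at h2
  have hx0 : x + (0:ℝ) • v = x := by simp
  rw [hx0] at h2
  linarith

lemma descent_lemma {f : E → ℝ} {L : ℝ} (hL : 0 ≤ L) (hf : Differentiable ℝ f)
    (hs : ∀ x y : E, ‖gradient f x - gradient f y‖ ≤ L * ‖x - y‖) (x y : E) :
    f y ≤ f x + ⟪gradient f x, y - x⟫ + L * ‖y - x‖ ^ 2 := by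
  have key : ‖f y - f x - (fderiv ℝ f x) (y - x)‖ ≤ (L * ‖y - x‖) * ‖y - x‖ := by
    apply Convex.norm_image_sub_le_of_norm_fderiv_le' (fun u _ => hf u)
      (fun u hu => ?_) (convex_segment x y) (left_mem_segment ℝ x y) (right_mem_segment ℝ x y)
    rw [norm_fderiv_sub_eq]
    calc ‖gradient f u - gradient f x‖ ≤ L * ‖u - x‖ := hs u x
      _ ≤ L * ‖y - x‖ := by
          gcongr
          obtain ⟨a, b, ha, hb, hab, rfl⟩ := hu
          have heq : a • x + b • y - x = b • (y - x) := by
            have : a = 1 - b := by linarith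
            rw [this]; module
          rw [heq, norm_smul]
          simpa [abs_of_nonneg hb] using
            mul_le_of_le_one_left (norm_nonneg (y - x)) (by rw [abs_of_nonneg hb]; linarith : |b| ≤ 1)
  have h2 := (abs_le.mp (by rwa [Real.norm_eq_abs] at key)).2
  rw [fderiv_apply_eq_inner_gradient] at h2
  nlinarith [norm_nonneg (y - x)]

lemma gradient_sub_inner (f : E → ℝ) (hf : Differentiable ℝ f) (c : E) (z : E) :
    gradient (fun u => f u - ⟪c, u⟫) z = gradient f z - c := by
  have h1 : HasFDerivAt (fun u => f u - ⟪c, u⟫)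
      (InnerProductSpace.toDual ℝ E (gradient f z) - InnerProductSpace.toDual ℝ E c) z := by
    have ha : HasFDerivAt f (InnerProductSpace.toDual ℝ E (gradient f z)) z :=
      (hf z).hasGradientAt.hasFDerivAt
    have hb : HasFDerivAt (fun u : E => ⟪c, u⟫) (InnerProductSpace.toDual ℝ E c) z := by
      have := (innerSL ℝ c).hasFDerivAt (x := z)
      convert this using 2 <;> simp [InnerProductSpace.toDual] <;> rfl
    exact ha.sub hb
  have h2 : HasGradientAt (fun u => f u - ⟪c, u⟫) (gradient f z - c) z := by
    rw [hasGradientAt_iff_hasFDerivAt]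
    convert h1 using 1
    rfl
    rw [map_sub]
  exact h2.gradient

lemma half_coco {f : E → ℝ} {L : ℝ} (hL : 0 < L) (hf : Differentiable ℝ f)
    (hc : ConvexOn ℝ Set.univ f)
    (hs : ∀ x y : E, ‖gradient f x - gradient f y‖ ≤ L * ‖x - y‖) (x y : E) :
    f x + ⟪gradient f x, y - x⟫ + (1 / (4 * L)) * ‖gradient f y - gradient f x‖ ^ 2 ≤ f y := by
  set c := gradient f x with hc'
  set φ : E → ℝ := fun u => f u - ⟪c, u⟫ with hφ
  have hφdiff : Differentiable ℝ φ := hf.sub ((innerSL ℝ c).differentiable)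
  have hφgrad : ∀ z, gradient φ z = gradient f z - c := gradient_sub_inner f hf c
  have hφconv : ConvexOn ℝ Set.univ φ := by
    refine ⟨convex_univ, fun u _ v _ a b ha hb hab => ?_⟩
    have h := hc.2 (Set.mem_univ u) (Set.mem_univ v) ha hb hab
    have hin : ⟪c, a • u + b • v⟫ = a * ⟪c, u⟫ + b * ⟪c, v⟫ := by
      rw [inner_add_right, inner_smul_right, inner_smul_right]
    show f (a • u + b • v) - ⟪c, a • u + b • v⟫ ≤
      a • (f u - ⟪c, u⟫) + b • (f v - ⟪c, v⟫)
    rw [hin]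
    simp only [smul_eq_mul] at h ⊢
    linarith
  have hφlip : ∀ a b : E, ‖gradient φ a - gradient φ b‖ ≤ L * ‖a - b‖ := by
    intro a b
    rw [hφgrad, hφgrad]
    simpa using hs a b
  -- φ has a global minimum at x since ∇φ x = 0
  have hgx : gradient φ x = 0 := by rw [hφgrad, hc']; simp
  set z : E := y - (1 / (2 * L)) • gradient φ y with hz
  have hmin : φ x ≤ φ z := by
    have := convex_first_order hφdiff hφconv x z
    rw [hgx] at this
    simpa using this
  have hdesc : φ z ≤ φ y - (1 / (4 * L)) * ‖gradient φ y‖ ^ 2 := by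
    have hd := descent_lemma hL.le hφdiff hφlip y z
    have hzy : z - y = -((1 / (2 * L)) • gradient φ y) := by rw [hz]; abel
    have hi : ⟪gradient φ y, z - y⟫ = -(1 / (2 * L)) * ‖gradient φ y‖ ^ 2 := by
      rw [hzy, inner_neg_right, real_inner_smul_right, real_inner_self_eq_norm_sq]
      ring
    have hn : ‖z - y‖ ^ 2 = (1 / (2 * L)) ^ 2 * ‖gradient φ y‖ ^ 2 := by
      rw [hzy, norm_neg, norm_smul, mul_pow, Real.norm_eq_abs, sq_abs]
    rw [hi, hn] at hd
    have hLe : L * ((1 / (2 * L)) ^ 2 * ‖gradient φ y‖ ^ 2)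
        = (1 / (4 * L)) * ‖gradient φ y‖ ^ 2 := by
      field_simp
      ring
    rw [hLe] at hd
    have hqq : (1 / (2 * L)) * ‖gradient φ y‖ ^ 2
        = 2 * ((1 / (4 * L)) * ‖gradient φ y‖ ^ 2) := by
      field_simp; ring
    linarith
  have hcomb := le_trans hmin hdesc
  have hφy : gradient φ y = gradient f y - c := hφgrad y
  have hφxv : φ x = f x - ⟪c, x⟫ := rfl
  have hφyv : φ y = f y - ⟪c, y⟫ := rfl
  rw [hφxv, hφyv, hφy] at hcomb
  have hinner : ⟪c, y⟫ - ⟪c, x⟫ = ⟪c, y - x⟫ := by rw [inner_sub_right]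
  rw [hc'] at hinner ⊢
  linarith

lemma coco {f : E → ℝ} {L : ℝ} (hL : 0 < L) (hf : Differentiable ℝ f)
    (hc : ConvexOn ℝ Set.univ f)
    (hs : ∀ x y : E, ‖gradient f x - gradient f y‖ ≤ L * ‖x - y‖) (x y : E) :
    (1 / (2 * L)) * ‖gradient f x - gradient f y‖ ^ 2
      ≤ ⟪gradient f x - gradient f y, x - y⟫ := by
  have h1 := half_coco hL hf hc hs x y
  have h2 := half_coco hL hf hc hs y x
  set gx := gradient f x
  set gy := gradient f y
  have e1 : ⟪gx, y - x⟫ = ⟪gx, y⟫ - ⟪gx, x⟫ := inner_sub_right _ _ _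
  have e2 : ⟪gy, x - y⟫ = ⟪gy, x⟫ - ⟪gy, y⟫ := inner_sub_right _ _ _
  have e3 : ⟪gx - gy, x - y⟫ = ⟪gx, x⟫ - ⟪gx, y⟫ - ⟪gy, x⟫ + ⟪gy, y⟫ := by
    rw [inner_sub_left, inner_sub_right, inner_sub_right]; ring
  have e4 : ‖gx - gy‖ = ‖gy - gx‖ := norm_sub_rev _ _
  rw [e1] at h1
  rw [e2] at h2
  rw [e3, e4]
  have hq : (1 / (2 * L)) * ‖gy - gx‖ ^ 2 = 2 * ((1 / (4 * L)) * ‖gy - gx‖ ^ 2) := by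
    field_simp; ring
  rw [hq]
  rw [show ‖gx - gy‖ = ‖gy - gx‖ from norm_sub_rev _ _] at h2
  linarith

lemma gd_step {f : E → ℝ} {L α : ℝ} (hL : 0 < L) (hf : Differentiable ℝ f)
    (hc : ConvexOn ℝ Set.univ f)
    (hs : ∀ x y : E, ‖gradient f x - gradient f y‖ ≤ L * ‖x - y‖)
    (hα : 0 < α) (hαL : α * L ≤ 1) (x : E) :
    ‖gradient f (x - α • gradient f x)‖ ≤ ‖gradient f x‖ := by
  set u := gradient f x with hu
  set g := gradient f (x - α • u) with hg
  have hkey := coco hL hf hc hs x (x - α • u)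
  have hxy : x - (x - α • u) = α • u := by abel
  rw [hxy] at hkey
  set h := u - g with hh
  have hinner : ⟪h, α • u⟫ = α * ⟪h, u⟫ := real_inner_smul_right _ _ _
  rw [hinner] at hkey
  -- (1/(2L)) ‖h‖² ≤ α ⟪h,u⟫  and αL ≤ 1  ⇒ ‖h‖² ≤ 2 ⟪h,u⟫
  have h2 : ‖h‖ ^ 2 ≤ 2 * ⟪h, u⟫ := by
    have hL2 : (0:ℝ) < 2 * L := by linarith
    rw [div_mul_eq_mul_div, one_mul, div_le_iff₀ hL2] at hkey
    have hhu : (0:ℝ) ≤ ⟪h, u⟫ := by nlinarith [sq_nonneg ‖h‖, mul_pos hα hL2]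
    nlinarith [mul_le_mul_of_nonneg_right hαL hhu]
  have hgu : g = u - h := by rw [hh]; abel
  have hexp : ‖g‖ ^ 2 = ‖u‖ ^ 2 - 2 * ⟪u, h⟫ + ‖h‖ ^ 2 := by
    rw [hgu, @norm_sub_sq_real]
  have hcomm : ⟪u, h⟫ = ⟪h, u⟫ := real_inner_comm _ _
  have : ‖g‖ ^ 2 ≤ ‖u‖ ^ 2 := by rw [hexp, hcomm]; linarith
  nlinarith [norm_nonneg g, norm_nonneg u]

lemma hessian_coco {f : E → ℝ} {L : ℝ} (hL : 0 < L) (hf : Differentiable ℝ f)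
    (hc : ConvexOn ℝ Set.univ f)
    (hs : ∀ x y : E, ‖gradient f x - gradient f y‖ ≤ L * ‖x - y‖)
    {w : E} (hd : DifferentiableAt ℝ (gradient f) w) (v : E) :
    (1 / (2 * L)) * ‖fderiv ℝ (gradient f) w v‖ ^ 2
      ≤ ⟪fderiv ℝ (gradient f) w v, v⟫ := by
  set D := fderiv ℝ (gradient f) w with hD
  set γ : ℝ → E := fun t => gradient f (w + t • v) with hγ
  have hline : ∀ t : ℝ, HasDerivAt (fun s : ℝ => w + s • v) v t := by
    intro t; simpa using ((hasDerivAt_id t).smul_const v).const_add w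
  have hγd : HasDerivAt γ (D v) 0 := by
    have h0 : HasFDerivAt (gradient f) D (w + (0:ℝ) • v) := by
      simpa using hd.hasFDerivAt
    exact h0.comp_hasDerivAt 0 (hline 0)
  have hslope : Filter.Tendsto (slope γ 0) (nhdsWithin 0 {(0:ℝ)}ᶜ) (nhds (D v)) :=
    hasDerivAt_iff_tendsto_slope.mp hγd
  have hineq : ∀ t : ℝ, t ≠ 0 →
      (1 / (2 * L)) * ‖slope γ 0 t‖ ^ 2 ≤ ⟪slope γ 0 t, v⟫ := by
    intro t ht
    have hcoco := coco hL hf hc hs (w + t • v) w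
    have hxy : (w + t • v) - w = t • v := by abel
    rw [hxy] at hcoco
    have hγ0 : γ 0 = gradient f w := by simp [hγ]
    set z := γ t - gradient f w with hz
    have hsl : slope γ 0 t = t⁻¹ • z := by
      rw [slope_def_module, hz, hγ0]
      simp
    rw [hsl]
    have hnorm : ‖t⁻¹ • z‖ ^ 2 = (t⁻¹) ^ 2 * ‖z‖ ^ 2 := by
      rw [norm_smul, mul_pow, Real.norm_eq_abs, sq_abs]
    have hinn : ⟪t⁻¹ • z, v⟫ = t⁻¹ * ⟪z, v⟫ := real_inner_smul_left _ _ _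
    rw [hnorm, hinn]
    have hzv : ⟪z, t • v⟫ = t * ⟪z, v⟫ := real_inner_smul_right _ _ _
    rw [hzv] at hcoco
    have ht2 : (0:ℝ) < (t⁻¹) ^ 2 := by positivity
    have := mul_le_mul_of_nonneg_left hcoco ht2.le
    calc (1 / (2 * L)) * ((t⁻¹) ^ 2 * ‖z‖ ^ 2) = (t⁻¹) ^ 2 * (1 / (2 * L) * ‖z‖ ^ 2) := by ring
      _ ≤ (t⁻¹) ^ 2 * (t * ⟪z, v⟫) := this
      _ = t⁻¹ * ⟪z, v⟫ := by field_simp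
  -- pass to the limit
  have hlim1 : Filter.Tendsto (fun t => (1 / (2 * L)) * ‖slope γ 0 t‖ ^ 2)
      (nhdsWithin 0 {(0:ℝ)}ᶜ) (nhds ((1 / (2 * L)) * ‖D v‖ ^ 2)) := by
    exact ((hslope.norm.pow 2).const_mul _)
  have hlim2 : Filter.Tendsto (fun t => ⟪slope γ 0 t, v⟫)
      (nhdsWithin 0 {(0:ℝ)}ᶜ) (nhds (⟪D v, v⟫)) := by
    exact hslope.inner tendsto_const_nhds
  exact le_of_tendsto_of_tendsto' hlim1 hlim2 (fun t => by
    by_cases ht : t = 0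
    · simp [ht, slope]
    · exact hineq t ht)

lemma contraction_step {L α : ℝ} (hL : 0 < L) (hα : 0 < α) (hαL : α * L ≤ 1) {Dv v : E}
    (h : (1 / (2 * L)) * ‖Dv‖ ^ 2 ≤ ⟪Dv, v⟫) : ‖v - α • Dv‖ ≤ ‖v‖ := by
  have hL2 : (0:ℝ) < 2 * L := by linarith
  rw [div_mul_eq_mul_div, one_mul, div_le_iff₀ hL2] at h
  have hDvv : (0:ℝ) ≤ ⟪Dv, v⟫ := by nlinarith [sq_nonneg ‖Dv‖]
  have hexp : ‖v - α • Dv‖ ^ 2 = ‖v‖ ^ 2 - 2 * (α * ⟪Dv, v⟫) + α ^ 2 * ‖Dv‖ ^ 2 := by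
    rw [@norm_sub_sq_real, real_inner_smul_right, norm_smul, mul_pow, Real.norm_eq_abs, sq_abs,
      real_inner_comm]
  have hsq : ‖v - α • Dv‖ ^ 2 ≤ ‖v‖ ^ 2 := by
    rw [hexp]
    nlinarith [mul_nonneg hα.le hDvv, mul_nonneg (mul_nonneg hα.le hα.le) hDvv]
  nlinarith [norm_nonneg (v - α • Dv), norm_nonneg v]

lemma gradient_contDiff {f : E → ℝ} (hf : ContDiff ℝ 2 f) :
    ContDiff ℝ 1 (gradient f) := by
  have h1 : ContDiff ℝ 1 (fderiv ℝ f) := hf.fderiv_right (by norm_num)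
  have h2 : gradient f = fun x => (InnerProductSpace.toDual ℝ E).symm (fderiv ℝ f x) := rfl
  rw [h2]
  exact (InnerProductSpace.toDual ℝ E).symm.contDiff.comp h1

end Aux

/-- for twice differentiable, convex, `L`-smooth task losses with gradient
variance bounded by `σ²` and `0 < α ≤ 1/L`, the MAML loss satisfies
`‖∇F(w)‖ ≤ σ + ‖∇f(w)‖` for every `w`. -/

theorem stmt_8 {d M : ℕ} (f : Fin M → EuclideanSpace ℝ (Fin d) → ℝ) (p : Fin M → ℝ)
    (hp : ∀ i, 0 ≤ p i) (hp1 : ∑ i, p i = 1)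
    (L σ α : ℝ) (hL : 0 < L) (hσ : 0 ≤ σ)
    (hf : ∀ i, ContDiff ℝ 2 (f i))
    (hconv : ∀ i, ConvexOn ℝ Set.univ (f i))
    (hsmooth : ∀ i, ∀ w u : EuclideanSpace ℝ (Fin d),
      ‖gradient (f i) w - gradient (f i) u‖ ≤ L * ‖w - u‖)
    (favg : EuclideanSpace ℝ (Fin d) → ℝ) (hfavg : favg = fun w => ∑ i, p i * f i w)
    (hvar : ∀ w : EuclideanSpace ℝ (Fin d),
      ∑ i, p i * ‖gradient (f i) w - gradient favg w‖ ^ 2 ≤ σ ^ 2)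
    (F : EuclideanSpace ℝ (Fin d) → ℝ)
    (hF : F = fun w => ∑ i, p i * f i (w - α • gradient (f i) w))
    (hα : 0 < α) (hα2 : α ≤ 1 / L)
    (w : EuclideanSpace ℝ (Fin d)) :
    ‖gradient F w‖ ≤ σ + ‖gradient favg w‖ := by
  have hαL : α * L ≤ 1 := by
    calc α * L ≤ (1 / L) * L := by nlinarith
      _ = 1 := by field_simp
  have hdiff : ∀ i, Differentiable ℝ (f i) := fun i =>
    (hf i).differentiable (by norm_num)
  have hGdiff : ∀ i, Differentiable ℝ (gradient (f i)) := fun i =>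
    (gradient_contDiff (hf i)).differentiable (by norm_num)
  -- notation
  set A := gradient favg w with hA
  set xi : Fin M → EuclideanSpace ℝ (Fin d) := fun i => w - α • gradient (f i) w with hxi
  set D : Fin M → (EuclideanSpace ℝ (Fin d) →L[ℝ] EuclideanSpace ℝ (Fin d)) := fun i => fderiv ℝ (gradient (f i)) w with hD
  set g : Fin M → EuclideanSpace ℝ (Fin d) := fun i => gradient (f i) (xi i) with hg
  -- derivative of F
  have hTd : ∀ i, HasFDerivAt (fun u : EuclideanSpace ℝ (Fin d) => u - α • gradient (f i) u)
      (ContinuousLinearMap.id ℝ (EuclideanSpace ℝ (Fin d)) - α • D i) w := by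
    intro i
    exact (hasFDerivAt_id w).sub (((hGdiff i w).hasFDerivAt).const_smul α)
  have hsummand : ∀ i, HasFDerivAt (fun u : EuclideanSpace ℝ (Fin d) => p i * f i (u - α • gradient (f i) u))
      (p i • ((fderiv ℝ (f i) (xi i)).comp (ContinuousLinearMap.id ℝ (EuclideanSpace ℝ (Fin d)) - α • D i))) w := by
    intro i
    have hcomp := ((hdiff i (xi i)).hasFDerivAt).comp w (hTd i)
    exact hcomp.const_mul (p i)
  have hFd : HasFDerivAt F
      (∑ i, p i • ((fderiv ℝ (f i) (xi i)).comp (ContinuousLinearMap.id ℝ (EuclideanSpace ℝ (Fin d)) - α • D i))) w := by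
    rw [hF]
    exact HasFDerivAt.fun_sum (fun i _ => hsummand i)
  have hFgrad : ∀ v : EuclideanSpace ℝ (Fin d), ⟪gradient F w, v⟫ = ∑ i, p i * ⟪g i, v - α • D i v⟫ := by
    intro v
    rw [← fderiv_apply_eq_inner_gradient, hFd.fderiv]
    rw [ContinuousLinearMap.sum_apply]
    congr 1
    funext i
    rw [ContinuousLinearMap.smul_apply, ContinuousLinearMap.comp_apply]
    simp only [ContinuousLinearMap.sub_apply, ContinuousLinearMap.smul_apply,
      ContinuousLinearMap.id_apply, smul_eq_mul]
    rw [fderiv_apply_eq_inner_gradient]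
  set G := gradient F w with hG
  -- main bound ‖G‖² ≤ S * ‖G‖
  have hcontr : ∀ i, ‖G - α • D i G‖ ≤ ‖G‖ := fun i =>
    contraction_step hL hα hαL (hessian_coco hL (hdiff i) (hconv i) (hsmooth i) (hGdiff i w) G)
  have hgd : ∀ i, ‖g i‖ ≤ ‖gradient (f i) w‖ := fun i =>
    gd_step hL (hdiff i) (hconv i) (hsmooth i) hα hαL w
  have hsq : ‖G‖ ^ 2 ≤ (∑ i, p i * ‖gradient (f i) w‖) * ‖G‖ := by
    have h1 : ‖G‖ ^ 2 = ⟪G, G⟫ := (real_inner_self_eq_norm_sq G).symm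
    rw [h1, hFgrad G, Finset.sum_mul]
    apply Finset.sum_le_sum
    intro i _
    calc p i * ⟪g i, G - α • D i G⟫ ≤ p i * (‖g i‖ * ‖G - α • D i G‖) := by
          apply mul_le_mul_of_nonneg_left (real_inner_le_norm _ _) (hp i)
      _ ≤ p i * (‖gradient (f i) w‖ * ‖G‖) := by
          apply mul_le_mul_of_nonneg_left _ (hp i)
          exact mul_le_mul (hgd i) (hcontr i) (norm_nonneg _) (norm_nonneg _)
      _ = p i * ‖gradient (f i) w‖ * ‖G‖ := by ring
  have hS : ∑ i, p i * ‖gradient (f i) w‖ ≤ σ + ‖A‖ := by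
    have hsplit : ∀ i, ‖gradient (f i) w‖ ≤ ‖gradient (f i) w - A‖ + ‖A‖ := by
      intro i
      have := norm_add_le (gradient (f i) w - A) A
      simpa using this
    calc ∑ i, p i * ‖gradient (f i) w‖
        ≤ ∑ i, p i * (‖gradient (f i) w - A‖ + ‖A‖) := by
          apply Finset.sum_le_sum
          exact fun i _ => mul_le_mul_of_nonneg_left (hsplit i) (hp i)
      _ = (∑ i, p i * ‖gradient (f i) w - A‖) + ‖A‖ := by
          simp only [mul_add]
          rw [Finset.sum_add_distrib, ← Finset.sum_mul, hp1, one_mul]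
      _ ≤ σ + ‖A‖ := by
          have hcs := Finset.sum_mul_sq_le_sq_mul_sq Finset.univ
            (fun i => Real.sqrt (p i)) (fun i => Real.sqrt (p i) * ‖gradient (f i) w - A‖)
          have e1 : ∀ i : Fin M, Real.sqrt (p i) * (Real.sqrt (p i) * ‖gradient (f i) w - A‖)
              = p i * ‖gradient (f i) w - A‖ := fun i => by
            rw [← mul_assoc, Real.mul_self_sqrt (hp i)]
          have e3 : ∀ i : Fin M, (Real.sqrt (p i) * ‖gradient (f i) w - A‖) ^ 2
              = p i * ‖gradient (f i) w - A‖ ^ 2 := fun i => by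
            rw [mul_pow, Real.sq_sqrt (hp i)]
          simp only [e1, e3, Real.sq_sqrt (hp _)] at hcs
          rw [hp1, one_mul] at hcs
          have hnn : 0 ≤ ∑ i, p i * ‖gradient (f i) w - A‖ :=
            Finset.sum_nonneg fun i _ => mul_nonneg (hp i) (norm_nonneg _)
          have hv := hvar w
          rw [← hA] at hv
          nlinarith [hcs, hnn, hσ, hv]
  have hGnonneg : 0 ≤ ‖G‖ := norm_nonneg G
  rcases eq_or_lt_of_le hGnonneg with h0 | h0
  · rw [← h0]; positivity
  · have := le_of_mul_le_mul_right (by calc ‖G‖ * ‖G‖ = ‖G‖^2 := by ring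
      _ ≤ (∑ i, p i * ‖gradient (f i) w‖) * ‖G‖ := hsq) h0
    linarith
end

section
/- Let f : ℝ^d → ℝ be μ-strongly convex, L-smooth, twice differentiable, 0 < α < 1/L, and F(w) = f(w - α∇f(w)). Then w is a critical point of F if and only if w - α∇f(w) = x*, where x* is the unique global minimizer of f; moreover such w exists and is unique. -/
open InnerProductSpace

theorem stmt_15_aux {E : Type*} [NormedAddCommGroup E] [InnerProductSpace ℝ E]
    [CompleteSpace E] (f : E → ℝ) (μ L α : ℝ)
    (hμ : 0 < μ) (hμL : μ ≤ L)
    (hf : ContDiff ℝ 2 f)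
    (hsc : ∀ w u : E, μ * ‖w - u‖ ≤ ‖gradient f w - gradient f u‖)
    (hsm : ∀ w u : E, ‖gradient f w - gradient f u‖ ≤ L * ‖w - u‖)
    (hα : 0 < α) (hα2 : α < 1 / L)
    (F : E → ℝ) (hF : F = fun u => f (u - α • gradient f u))
    (xstar : E) (hxmin : ∀ y, f xstar ≤ f y) :
    (∀ w : E, gradient F w = 0 ↔ w - α • gradient f w = xstar) ∧
    (∃! w : E, gradient F w = 0) := by

  have hL : 0 < L := lt_of_lt_of_le hμ hμL
  have hαL : α * L < 1 := by
    rw [lt_div_iff₀ hL] at hα2; exact hα2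
  have hαL0 : 0 ≤ α * L := le_of_lt (mul_pos hα hL)
  -- gradient f is L-Lipschitz
  have hlip : LipschitzWith (Real.toNNReal L) (gradient f) := by
    apply LipschitzWith.of_dist_le_mul
    intro x y
    simp only [dist_eq_norm]
    calc ‖gradient f x - gradient f y‖ ≤ L * ‖x - y‖ := hsm x y
      _ = (Real.toNNReal L : ℝ) * ‖x - y‖ := by rw [Real.coe_toNNReal L hL.le]
  have hdf : Differentiable ℝ f := hf.differentiable two_ne_zero
  have hdgrad : Differentiable ℝ (gradient f) := by
    have h1 : ContDiff ℝ 1 (fderiv ℝ f) := hf.fderiv_right (by norm_num)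
    have h2 : Differentiable ℝ (fderiv ℝ f) := h1.differentiable one_ne_zero
    have : gradient f = fun x => (toDual ℝ E).symm (fderiv ℝ f x) := rfl
    rw [this]
    exact ((toDual ℝ E).symm.toContinuousLinearEquiv.differentiable).comp h2
  -- gradient f z = 0 ↔ z = xstar
  have hgradstar : gradient f xstar = 0 := by
    have : fderiv ℝ f xstar = 0 := by
      apply IsLocalMin.fderiv_eq_zero
      exact (isMinOn_univ_iff.2 hxmin).isLocalMin Filter.univ_mem
    show (toDual ℝ E).symm (fderiv ℝ f xstar) = 0
    rw [this]; simp
  have hcrit : ∀ z : E, gradient f z = 0 ↔ z = xstar := by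
    intro z
    constructor
    · intro hz
      have := hsc z xstar
      rw [hz, hgradstar, sub_zero, norm_zero] at this
      have hz0 : ‖z - xstar‖ = 0 := by nlinarith [norm_nonneg (z - xstar)]
      rw [← sub_eq_zero]
      exact norm_eq_zero.mp hz0
    · rintro rfl; exact hgradstar
  -- T and its derivative
  set T : E → E := fun w => w - α • gradient f w with hT
  have hTinj : ∀ w u : E, T w = T u → w = u := by
    intro w u h
    have h1 : w - u = α • (gradient f w - gradient f u) := by
      have := sub_eq_zero.mpr h
      simp only [hT] at this ⊢
      rw [smul_sub]
      abel_nf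
      abel_nf at this
      linear_combination (norm := module) this
    have h2 : ‖w - u‖ ≤ α * L * ‖w - u‖ := by
      calc ‖w - u‖ = ‖α • (gradient f w - gradient f u)‖ := by rw [h1]
        _ = |α| * ‖gradient f w - gradient f u‖ := by rw [norm_smul, Real.norm_eq_abs]
        _ ≤ α * (L * ‖w - u‖) := by
            rw [abs_of_pos hα]
            exact mul_le_mul_of_nonneg_left (hsm w u) hα.le
        _ = α * L * ‖w - u‖ := by ring
    rw [← sub_eq_zero]
    by_contra hne
    have : 0 < ‖w - u‖ := norm_pos_iff.mpr hne
    nlinarith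
  -- derivative of T is a unit
  have hDT : ∀ w : E, HasFDerivAt T
      (ContinuousLinearMap.id ℝ E - α • fderiv ℝ (gradient f) w) w := by
    intro w
    exact (hasFDerivAt_id w).sub (((hdgrad w).hasFDerivAt).const_smul α)
  have hunit : ∀ w : E, IsUnit (ContinuousLinearMap.id ℝ E - α • fderiv ℝ (gradient f) w) := by
    intro w
    have hn : ‖α • fderiv ℝ (gradient f) w‖ < 1 := by
      rw [norm_smul, Real.norm_eq_abs, abs_of_pos hα]
      have := norm_fderiv_le_of_lipschitz ℝ hlip (x₀ := w)
      rw [Real.coe_toNNReal L hL.le] at this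
      calc α * ‖fderiv ℝ (gradient f) w‖ ≤ α * L := mul_le_mul_of_nonneg_left this hα.le
        _ < 1 := hαL
    exact isUnit_one_sub_of_norm_lt_one hn
  -- gradient F w = 0 ↔ T w = xstar
  have key : ∀ w : E, gradient F w = 0 ↔ T w = xstar := by
    intro w
    have hFd : HasFDerivAt F ((fderiv ℝ f (T w)).comp
        (ContinuousLinearMap.id ℝ E - α • fderiv ℝ (gradient f) w)) w := by
      rw [hF]
      exact ((hdf (T w)).hasFDerivAt).comp w (hDT w)
    have hfd : fderiv ℝ F w = (fderiv ℝ f (T w)).comp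
        (ContinuousLinearMap.id ℝ E - α • fderiv ℝ (gradient f) w) := hFd.fderiv
    have hgF : gradient F w = 0 ↔ fderiv ℝ F w = 0 := by
      constructor
      · intro h
        have : (toDual ℝ E).symm (fderiv ℝ F w) = 0 := h
        have := congrArg (toDual ℝ E) this
        simpa using this
      · intro h
        show (toDual ℝ E).symm (fderiv ℝ F w) = 0
        rw [h]; simp
    rw [hgF, hfd, ← hcrit (T w)]
    have hgf : gradient f (T w) = 0 ↔ fderiv ℝ f (T w) = 0 := by
      constructor
      · intro h
        have : (toDual ℝ E).symm (fderiv ℝ f (T w)) = 0 := h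
        have := congrArg (toDual ℝ E) this
        simpa using this
      · intro h
        show (toDual ℝ E).symm (fderiv ℝ f (T w)) = 0
        rw [h]; simp
    rw [hgf]
    constructor
    · intro h
      obtain ⟨u, hu⟩ := hunit w
      ext v
      have hsurj : (ContinuousLinearMap.id ℝ E - α • fderiv ℝ (gradient f) w)
          ((↑u⁻¹ : E →L[ℝ] E) v) = v := by
        have h3 : ((u : E →L[ℝ] E) * (↑u⁻¹ : E →L[ℝ] E)) v = (1 : E →L[ℝ] E) v := by
          rw [u.mul_inv]
        rw [hu] at h3
        simpa using h3
      have h2 := congrFun (congrArg DFunLike.coe h) ((↑u⁻¹ : E →L[ℝ] E) v)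
      simp only [ContinuousLinearMap.comp_apply, ContinuousLinearMap.zero_apply] at h2 ⊢
      rw [hsurj] at h2
      exact h2
    · intro h
      rw [h]
      ext v; simp
  refine ⟨fun w => key w, ?_⟩
  -- existence and uniqueness
  have hcontr : ContractingWith ⟨α * L, hαL0⟩ (fun w => xstar + α • gradient f w) := by
    constructor
    · exact_mod_cast hαL
    · apply LipschitzWith.of_dist_le_mul
      intro x y
      simp only [dist_eq_norm, add_sub_add_left_eq_sub, ← smul_sub, norm_smul,
        Real.norm_eq_abs, abs_of_pos hα]
      push_cast
      calc α * ‖gradient f x - gradient f y‖ ≤ α * (L * ‖x - y‖) :=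
            mul_le_mul_of_nonneg_left (hsm x y) hα.le
        _ = α * L * ‖x - y‖ := by ring
  obtain ⟨w, hw, -⟩ := hcontr.exists_fixedPoint 0 (edist_ne_top _ _)
  have hwT : T w = xstar := by
    have : xstar + α • gradient f w = w := hw
    show w - α • gradient f w = xstar
    nth_rewrite 1 [← this]
    abel
  refine ⟨w, (key w).mpr hwT, fun u hu => ?_⟩
  have := (key u).mp hu
  exact hTinj u w (by rw [this, hwT])


/-- for `f` `μ`-strongly convex, `L`-smooth, twice differentiable,
`0 < α < 1/L` and `F(w) = f(w - α∇f(w))`, `w` is a critical point of `F` iff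
`w - α∇f(w) = x*` where `x*` is the unique global minimizer of `f`; moreover such a `w`
exists and is unique. -/
theorem stmt_15 {d : ℕ} (f : EuclideanSpace ℝ (Fin d) → ℝ) (μ L α : ℝ)
    (hμ : 0 < μ) (hμL : μ ≤ L)
    (hf : ContDiff ℝ 2 f)
    (hsc : ∀ w u : EuclideanSpace ℝ (Fin d),
      μ * ‖w - u‖ ≤ ‖gradient f w - gradient f u‖)
    (hsm : ∀ w u : EuclideanSpace ℝ (Fin d),
      ‖gradient f w - gradient f u‖ ≤ L * ‖w - u‖)
    (hα : 0 < α) (hα2 : α < 1 / L)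
    (F : EuclideanSpace ℝ (Fin d) → ℝ) (hF : F = fun u => f (u - α • gradient f u))
    (xstar : EuclideanSpace ℝ (Fin d)) (hxmin : ∀ y, f xstar ≤ f y) :
    (∀ w : EuclideanSpace ℝ (Fin d),
      gradient F w = 0 ↔ w - α • gradient f w = xstar) ∧
    (∃! w : EuclideanSpace ℝ (Fin d), gradient F w = 0) :=
  stmt_15_aux f μ L α hμ hμL hf hsc hsm hα hα2 F hF xstar hxmin
end
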